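/- Let k ≥ 3 be fixed and let r(n) denote the minimum over all k-colorings of the complete k-uniform hypergraph on n vertices of the maximum size of a monochromatic set. Let P be a bipartite S_k-free poset with bipartition (A,B) where |A| ≥ n and r(n) ≥ 2. Then with c = 3k·2^k, for every integer q with 2 ≤ q ≤ r(n), there exists Q ⊆ A with |Q| = q such that dim(P) ≤ dim(P − Q) + c·ln q. -/

import Mathlib

/-- A relation `r` is a linear extension of the partial order on `α`. -/
def IsLinExt {α : Type*} [Preorder α] (r : α → α → Prop) : Prop :=
  IsLinearOrder α r ∧ ∀ a b : α, a ≤ b → r a b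

/-- A finite family of linear extensions whose intersection is the order. -/
def IsRealizer {α : Type*} [Preorder α] {d : ℕ} (L : Fin d → (α → α → Prop)) : Prop :=
  (∀ i, IsLinExt (L i)) ∧ ∀ a b : α, a ≤ b ↔ ∀ i, L i a b

/-- Order dimension: minimum size of a realizer. -/
noncomputable def orderDim (α : Type*) [Preorder α] : ℕ :=
  sInf { d | ∃ L : Fin d → (α → α → Prop), IsRealizer L }

/-- `α` contains an induced copy of the standard example `S_k`. -/
def HasStdExample (α : Type*) [Preorder α] (k : ℕ) : Prop :=
  ∃ a b : Fin k → α,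
    (∀ i j, a i ≤ a j ↔ i = j) ∧
    (∀ i j, b i ≤ b j ↔ i = j) ∧
    (∀ i j, a i ≤ b j ↔ i ≠ j) ∧
    (∀ i j, ¬ b i ≤ a j)

/-- `α` is `S_k`-free. -/
def SkFree (α : Type*) [Preorder α] (k : ℕ) : Prop := ¬ HasStdExample α k

/-- `(A,B)` is a bipartition of the (height two) poset `α`. -/
def IsBipartition {α : Type*} [Preorder α] (A B : Set α) : Prop :=
  (∀ x, x ∈ A ∨ x ∈ B) ∧ (∀ x, ¬(x ∈ A ∧ x ∈ B)) ∧
  ∀ x y : α, x < y → x ∈ A ∧ y ∈ B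

def Incomp {α : Type*} [Preorder α] (x y : α) : Prop := ¬ x ≤ y ∧ ¬ y ≤ x

def CriticalPair {α : Type*} [Preorder α] (x y : α) : Prop :=
  Incomp x y ∧ (∀ z, z < x → z < y) ∧ (∀ z, y < z → x < z)

/-- `b` is a mate of `s i` with respect to the subset enumerated by `s`. -/
def IsMate {α : Type*} [Preorder α] {k : ℕ} (s : Fin k → α) (i : Fin k) (b : α) : Prop :=
  Incomp (s i) b ∧ ∀ j, j ≠ i → s j < b

/-- `H` is monochromatic for the coloring `χ` of the `k`-subsets. -/
def MonoSet {n c : ℕ} (k : ℕ) (χ : Finset (Fin n) → Fin c) (H : Finset (Fin n)) : Prop :=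
  ∀ s t : Finset (Fin n), s ⊆ H → t ⊆ H → s.card = k → t.card = k → χ s = χ t

/-- `r(n)`: the minimum over `k`-colorings of the `k`-subsets of `[n]` of the
size of a largest monochromatic subset. -/
noncomputable def monoRamsey (k n : ℕ) : ℕ :=
  sInf { m | ∃ χ : Finset (Fin n) → Fin k,
    m = sSup { c | ∃ H : Finset (Fin n), H.card = c ∧ MonoSet k χ H } }

section Aux
variable {α : Type*} [PartialOrder α]

lemma auxRefl {Ls : α → α → Prop} (h : IsLinExt Ls) (x : α) : Ls x x :=
  h.1.toIsPartialOrder.toIsPreorder.toRefl.refl x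

lemma auxTrans {Ls : α → α → Prop} (h : IsLinExt Ls) {x y z : α} (h1 : Ls x y) (h2 : Ls y z) :
    Ls x z := h.1.toIsPartialOrder.toIsPreorder.toIsTrans.trans _ _ _ h1 h2

lemma auxAnti {Ls : α → α → Prop} (h : IsLinExt Ls) {x y : α} (h1 : Ls x y) (h2 : Ls y x) :
    x = y := h.1.toIsPartialOrder.toAntisymm.antisymm _ _ h1 h2

lemma auxTotal {Ls : α → α → Prop} (h : IsLinExt Ls) (x y : α) : Ls x y ∨ Ls y x :=
  h.1.toTotal.total x y

/-- lexicographic modification by a monotone ℕ-key -/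
def kext (Ls : α → α → Prop) (κ : α → ℕ) : α → α → Prop :=
  fun x y => κ x < κ y ∨ (κ x = κ y ∧ Ls x y)

lemma kext_isLinExt {Ls : α → α → Prop} (hLs : IsLinExt Ls) {κ : α → ℕ} (hκ : Monotone κ) :
    IsLinExt (kext Ls κ) := by
  constructor
  · exact
      { refl := fun a => Or.inr ⟨rfl, auxRefl hLs a⟩
        trans := by
          rintro a b c (h | ⟨e, h⟩) (h' | ⟨e', h'⟩)
          · exact Or.inl (h.trans h')
          · exact Or.inl (e' ▸ h)
          · exact Or.inl (e ▸ h')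
          · exact Or.inr ⟨e.trans e', auxTrans hLs h h'⟩
        antisymm := by
          rintro a b (h | ⟨e, h⟩) (h' | ⟨e', h'⟩)
          · omega
          · omega
          · omega
          · exact auxAnti hLs h h'
        total := by
          intro a b
          rcases lt_trichotomy (κ a) (κ b) with h | h | h
          · exact Or.inl (Or.inl h)
          · rcases auxTotal hLs a b with h' | h'
            · exact Or.inl (Or.inr ⟨h, h'⟩)
            · exact Or.inr (Or.inr ⟨h.symm, h'⟩)
          · exact Or.inr (Or.inl h) }
  · intro a b hab
    rcases lt_or_eq_of_le (hκ hab) with h | h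
    · exact Or.inl h
    · exact Or.inr ⟨h, hLs.2 a b hab⟩

lemma kext_rev {Ls : α → α → Prop} {κ : α → ℕ} {a b : α} (h : κ b < κ a) :
    ¬ kext Ls κ a b := by
  rintro (h' | ⟨e, _⟩) <;> omega

lemma linext_rev_of_lt {Ls : α → α → Prop} (hLs : IsLinExt Ls) {a b : α} (h : b < a) :
    ¬ Ls a b := fun hab => absurd (auxAnti hLs hab (hLs.2 b a h.le)) (ne_of_gt h)

lemma exists_linext (α : Type*) [PartialOrder α] : ∃ Ls : α → α → Prop, IsLinExt Ls := by
  obtain ⟨s, hs, hext⟩ := extend_partialOrder ((· ≤ ·) : α → α → Prop)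
  exact ⟨s, hs, fun a b h => hext _ _ h⟩

lemma orderDim_le_list (l : List (α → α → Prop))
    (h1 : ∀ r ∈ l, IsLinExt r)
    (h2 : ∀ a b : α, ¬ a ≤ b → ∃ r ∈ l, ¬ r a b) :
    orderDim α ≤ l.length := by
  apply Nat.sInf_le
  refine ⟨fun i => l.get i, fun i => h1 _ (l.get_mem i), fun a b => ⟨fun h i => (h1 _ (l.get_mem i)).2 a b h, ?_⟩⟩
  intro h
  by_contra hab
  obtain ⟨r, hr, hnr⟩ := h2 a b hab
  obtain ⟨i, hi⟩ := List.mem_iff_get.1 hr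
  exact hnr (hi ▸ h i)

lemma realizer_exists (α : Type*) [Fintype α] [PartialOrder α] [DecidableEq α] :
    ∃ (L : Fin (orderDim α) → (α → α → Prop)), IsRealizer L := by
  classical
  obtain ⟨Ls, hLs⟩ := exists_linext α
  have hne : { d | ∃ L : Fin d → (α → α → Prop), IsRealizer L }.Nonempty := by
    set l : List (α → α → Prop) :=
      Ls :: ((Finset.univ : Finset (α × α)).toList.map
        (fun p => kext Ls (fun u => if p.1 ≤ u then 1 else 0))) with hl
    have h1 : ∀ r ∈ l, IsLinExt r := by
      intro r hr
      rcases List.mem_cons.1 hr with rfl | hr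
      · exact hLs
      · obtain ⟨p, _, rfl⟩ := List.mem_map.1 hr
        refine kext_isLinExt hLs ?_
        intro u v huv
        by_cases h : p.1 ≤ u
        · simp [h, h.trans huv]
        · by_cases h' : p.1 ≤ v <;> simp [h, h']
    have h2 : ∀ a b : α, ¬ a ≤ b → ∃ r ∈ l, ¬ r a b := by
      intro a b hab
      by_cases hba : b ≤ a
      · have hba' : b < a := lt_of_le_of_ne hba (fun h => hab (h ▸ le_refl a))
        exact ⟨Ls, List.mem_cons_self, linext_rev_of_lt hLs hba'⟩
      · refine ⟨kext Ls (fun u => if a ≤ u then 1 else 0), ?_, ?_⟩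
        · exact List.mem_cons_of_mem _ (List.mem_map.2 ⟨(a, b), Finset.mem_toList.2 (Finset.mem_univ _), rfl⟩)
        · apply kext_rev
          simp [hab, le_refl a]
      
    refine ⟨l.length, fun i => l.get i, fun i => h1 _ (l.get_mem i), fun a b => ⟨fun h i => (h1 _ (l.get_mem i)).2 a b h, ?_⟩⟩
    intro h
    by_contra hab
    obtain ⟨r, hr, hnr⟩ := h2 a b hab
    obtain ⟨i, hi⟩ := List.mem_iff_get.1 hr
    exact hnr (hi ▸ h i)
  exact Nat.sInf_mem hne

end Aux
section Cover
variable {q : ℕ}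

lemma count_covers (m : Fin q) (W : Finset (Fin q)) (hm : m ∉ W) :
    ((Finset.univ : Finset (Finset (Fin q))).filter (fun F => m ∈ F ∧ F ∩ W = ∅)).card
      = 2 ^ (q - 1 - W.card) := by
  classical
  have himg : (Finset.univ : Finset (Finset (Fin q))).filter (fun F => m ∈ F ∧ F ∩ W = ∅)
      = ((Finset.univ \ insert m W).powerset).image (insert m) := by
    ext F
    simp only [Finset.mem_filter, Finset.mem_univ, true_and, Finset.mem_image,
      Finset.mem_powerset]
    constructor
    · rintro ⟨hmF, hFW⟩
      refine ⟨F.erase m, ?_, ?_⟩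
      · intro x hx
        rcases Finset.mem_erase.1 hx with ⟨hxm, hxF⟩
        refine Finset.mem_sdiff.2 ⟨Finset.mem_univ _, ?_⟩
        intro hx'
        rcases Finset.mem_insert.1 hx' with h | h
        · exact hxm h
        · exact (Finset.notMem_empty x) (hFW ▸ Finset.mem_inter.2 ⟨hxF, h⟩)
      · exact Finset.insert_erase hmF
    · rintro ⟨G, hG, rfl⟩
      refine ⟨Finset.mem_insert_self _ _, ?_⟩
      apply Finset.eq_empty_of_forall_notMem
      intro x hx
      rcases Finset.mem_inter.1 hx with ⟨hx1, hx2⟩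
      rcases Finset.mem_insert.1 hx1 with rfl | hx1
      · exact hm hx2
      · exact (Finset.mem_sdiff.1 (hG hx1)).2 (Finset.mem_insert_of_mem hx2)
  rw [himg, Finset.card_image_of_injOn, Finset.card_powerset]
  · congr 1
    rw [Finset.card_sdiff_of_subset (Finset.subset_univ _), Finset.card_insert_of_notMem hm]
    simp only [Finset.card_univ, Fintype.card_fin]
    omega
  · intro G hG G' hG' hGG'
    simp only [Finset.coe_powerset, Set.mem_preimage, Set.mem_powerset_iff,
      Finset.coe_subset] at hG hG'
    have hmG : m ∉ G := fun h => (Finset.mem_sdiff.1 (hG h)).2 (Finset.mem_insert_self _ _)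
    have hmG' : m ∉ G' := fun h => (Finset.mem_sdiff.1 (hG' h)).2 (Finset.mem_insert_self _ _)
    rw [← Finset.erase_insert hmG, ← Finset.erase_insert hmG', hGG']

lemma exists_good_F {k : ℕ} (hk : 3 ≤ k) (hq : 1 ≤ q) (R : Finset (Fin q × Finset (Fin q)))
    (hval : ∀ r ∈ R, r.1 ∉ r.2 ∧ r.2.card ≤ k - 2) :
    ∃ F : Finset (Fin q),
      R.card ≤ 2 ^ (k-1) * (R.filter (fun r => r.1 ∈ F ∧ F ∩ r.2 = ∅)).card := by
  classical
  set U : Finset (Finset (Fin q)) := Finset.univ with hU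
  have key : R.card * 2 ^ (q - 1) ≤
      ∑ F ∈ U, 2 ^ (k-2) * (R.filter (fun r => r.1 ∈ F ∧ F ∩ r.2 = ∅)).card := by
    have hswap : ∑ F ∈ U, (R.filter (fun r => r.1 ∈ F ∧ F ∩ r.2 = ∅)).card
        = ∑ r ∈ R, (U.filter (fun F => r.1 ∈ F ∧ F ∩ r.2 = ∅)).card := by
      simp only [Finset.card_filter]
      rw [Finset.sum_comm]
    rw [← Finset.mul_sum, hswap, Finset.mul_sum]
    calc R.card * 2 ^ (q-1) = ∑ _r ∈ R, 2 ^ (q-1) := by rw [Finset.sum_const, smul_eq_mul]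
    _ ≤ ∑ r ∈ R, 2 ^ (k-2) * (U.filter (fun F => r.1 ∈ F ∧ F ∩ r.2 = ∅)).card := by
        apply Finset.sum_le_sum
        intro r hr
        obtain ⟨h1, h2⟩ := hval r hr
        rw [count_covers r.1 r.2 h1, ← pow_add]
        apply pow_le_pow_right₀ (by norm_num)
        have hWq : r.2.card ≤ q - 1 := by
          have : r.2 ⊆ Finset.univ.erase r.1 := fun x hx =>
            Finset.mem_erase.2 ⟨fun h => h1 (h ▸ hx), Finset.mem_univ _⟩
          have := Finset.card_le_card this
          rwa [Finset.card_erase_of_mem (Finset.mem_univ _), Finset.card_univ,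
            Fintype.card_fin] at this
        omega
  have hUne : U.Nonempty := ⟨∅, Finset.mem_univ _⟩
  have htot : ∑ _F ∈ U, R.card ≤
      ∑ F ∈ U, 2 ^ (k-1) * (R.filter (fun r => r.1 ∈ F ∧ F ∩ r.2 = ∅)).card := by
    rw [Finset.sum_const, smul_eq_mul]
    have hcardU : U.card = 2 ^ q := by
      rw [hU, Finset.card_univ, Fintype.card_finset, Fintype.card_fin]
    calc U.card * R.card = 2 * (R.card * 2 ^ (q-1)) := by
          rw [hcardU]
          have h2 : (2:ℕ) ^ q = 2 * 2 ^ (q-1) := by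
            rw [← pow_succ']; congr 1; omega
          rw [h2]; ring
    _ ≤ 2 * ∑ F ∈ U, 2 ^ (k-2) * (R.filter (fun r => r.1 ∈ F ∧ F ∩ r.2 = ∅)).card :=
          Nat.mul_le_mul_left 2 key
    _ = ∑ F ∈ U, 2 ^ (k-1) * (R.filter (fun r => r.1 ∈ F ∧ F ∩ r.2 = ∅)).card := by
          rw [Finset.mul_sum]
          apply Finset.sum_congr rfl
          intro F _
          rw [← mul_assoc]
          congr 1
          rw [← pow_succ']
          congr 1
          omega
  obtain ⟨F, _, hF⟩ := Finset.exists_le_of_sum_le hUne htot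
  exact ⟨F, hF⟩

end Cover

section Cover2
variable {q : ℕ}

lemma cover_rec {k : ℕ} (hk : 3 ≤ k) (hq : 1 ≤ q) :
    ∀ (N : ℕ) (R : Finset (Fin q × Finset (Fin q))),
      (∀ r ∈ R, r.1 ∉ r.2 ∧ r.2.card ≤ k - 2) →
      (R.card : ℝ) < ((1 - ((2:ℝ) ^ (k-1))⁻¹)⁻¹) ^ N →
      ∃ 𝓕 : Finset (Finset (Fin q)), 𝓕.card ≤ N ∧
        ∀ r ∈ R, ∃ F ∈ 𝓕, r.1 ∈ F ∧ F ∩ r.2 = ∅ := by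
  classical
  have hβpos : (0:ℝ) < ((2:ℝ) ^ (k-1))⁻¹ := by positivity
  have hβle : ((2:ℝ) ^ (k-1))⁻¹ ≤ 1/2 := by
    rw [inv_le_comm₀ (by positivity) (by norm_num)]
    calc ((1:ℝ)/2)⁻¹ = 2^1 := by norm_num
    _ ≤ 2 ^ (k-1) := by
        apply pow_le_pow_right₀ (by norm_num)
        omega
  set β : ℝ := ((2:ℝ) ^ (k-1))⁻¹ with hβ
  have h1β : (0:ℝ) < 1 - β := by linarith
  intro N
  induction N with
  | zero =>
    intro R hval hR
    rw [pow_zero] at hR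
    refine ⟨∅, le_refl _, ?_⟩
    have : R.card = 0 := by exact_mod_cast Nat.lt_one_iff.1 (by exact_mod_cast hR)
    intro r hr
    rw [Finset.card_eq_zero.1 this] at hr
    exact absurd hr (Finset.notMem_empty r)
  | succ N ih =>
    intro R hval hR
    rcases R.eq_empty_or_nonempty with rfl | hRne
    · exact ⟨∅, Nat.zero_le _, fun r hr => absurd hr (Finset.notMem_empty r)⟩
    obtain ⟨F, hF⟩ := exists_good_F hk hq R hval
    set cov := (R.filter (fun r => r.1 ∈ F ∧ F ∩ r.2 = ∅)).card with hcov
    set R' := R.filter (fun r => ¬(r.1 ∈ F ∧ F ∩ r.2 = ∅)) with hR'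
    have hsplit : cov + R'.card = R.card := Finset.card_filter_add_card_filter_not _
    have hcovβ : β * R.card ≤ (cov : ℝ) := by
      have h : (R.card:ℝ) ≤ (2:ℝ)^(k-1) * cov := by exact_mod_cast hF
      rw [hβ, inv_mul_le_iff₀ (by positivity)]
      linarith
    have hR'lt : (R'.card : ℝ) < ((1 - β)⁻¹) ^ N := by
      have h1 : (R'.card : ℝ) = R.card - cov := by
        have := hsplit
        push_cast [← this]
        ring
      have h2 : (R'.card : ℝ) ≤ (1 - β) * R.card := by
        rw [h1]; nlinarith [hcovβ]
      have h3 : (1 - β) * (R.card : ℝ) < (1-β) * ((1 - β)⁻¹) ^ (N+1) :=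
        mul_lt_mul_of_pos_left hR h1β
      have h4 : (1-β) * ((1 - β)⁻¹) ^ (N+1) = ((1 - β)⁻¹) ^ N := by
        rw [pow_succ']
        rw [← mul_assoc, mul_inv_cancel₀ (ne_of_gt h1β), one_mul]
      linarith
    obtain ⟨𝓕', h𝓕'card, h𝓕'⟩ := ih R' (fun r hr => hval r (Finset.mem_filter.1 hr).1) hR'lt
    refine ⟨insert F 𝓕', le_trans (Finset.card_insert_le _ _) (by omega), ?_⟩
    intro r hr
    by_cases hc : r.1 ∈ F ∧ F ∩ r.2 = ∅
    · exact ⟨F, Finset.mem_insert_self _ _, hc⟩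
    · obtain ⟨F', hF'1, hF'2⟩ := h𝓕' r (Finset.mem_filter.2 ⟨hr, hc⟩)
      exact ⟨F', Finset.mem_insert_of_mem hF'1, hF'2⟩

lemma geom_sum_le (x t : ℕ) (hx : 1 ≤ x) : ∑ j ∈ Finset.range (t+1), x^j ≤ (x+1)^t := by
  induction t with
  | zero => simp
  | succ t ih =>
    rw [Finset.sum_range_succ, pow_succ]
    have hx1 : x ^ (t+1) ≤ x * (x+1)^t := by
      rw [pow_succ, mul_comm (x^t) x]
      exact Nat.mul_le_mul_left x (le_trans (Nat.pow_le_pow_left (by omega) t) (le_refl _))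
    calc ∑ j ∈ Finset.range (t+1), x^j + x^(t+1) ≤ (x+1)^t + x * (x+1)^t := by
          apply Nat.add_le_add ih
          calc x^(t+1) = x * x^t := by rw [pow_succ]; ring
          _ ≤ x * (x+1)^t := Nat.mul_le_mul_left x (Nat.pow_le_pow_left (by omega) t)
    _ = (x+1)^t * (x+1) := by ring

lemma cover_main (k q : ℕ) (hk : 3 ≤ k) (hq : 2 ≤ q) :
    ∃ 𝓕 : Finset (Finset (Fin q)),
      (𝓕.card : ℝ) ≤ 2 ^ (k-1) * (2*(k:ℝ) - 2) * Real.log q + 2 ∧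
      ∀ (m : Fin q) (W : Finset (Fin q)), m ∉ W → W.card ≤ k - 2 →
        ∃ F ∈ 𝓕, m ∈ F ∧ F ∩ W = ∅ := by
  classical
  have hq1 : (1:ℝ) < (q:ℝ) := by exact_mod_cast hq.trans_lt' one_lt_two
  have hlogq : 0 < Real.log q := Real.log_pos hq1
  have hk3 : (3:ℝ) ≤ (k:ℝ) := by exact_mod_cast hk
  set x : ℝ := 2 ^ (k-1) * (2*(k:ℝ) - 2) * Real.log q with hx
  have hxpos : 0 ≤ x := by
    apply mul_nonneg (mul_nonneg (by positivity) (by linarith)) hlogq.le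
  set N : ℕ := ⌈x⌉₊ + 1 with hN
  set R : Finset (Fin q × Finset (Fin q)) :=
    Finset.univ.filter (fun r => r.1 ∉ r.2 ∧ r.2.card ≤ k - 2) with hR
  -- counting bound
  have hcount : R.card ≤ q * (q+1)^(k-2) := by
    set Ws : Finset (Finset (Fin q)) := Finset.univ.filter (fun W => W.card ≤ k - 2) with hWs
    have hsub : R ⊆ Finset.univ ×ˢ Ws := by
      intro r hr
      obtain ⟨-, h1, h2⟩ := Finset.mem_filter.1 hr
      exact Finset.mem_product.2 ⟨Finset.mem_univ _, Finset.mem_filter.2 ⟨Finset.mem_univ _, h2⟩⟩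
    have hWscard : Ws.card ≤ (q+1)^(k-2) := by
      have hsub2 : Ws ⊆ (Finset.range (k-1)).biUnion (fun j => Finset.univ.powersetCard j) := by
        intro W hW
        have h2 := (Finset.mem_filter.1 hW).2
        refine Finset.mem_biUnion.2 ⟨W.card, Finset.mem_range.2 (by omega), ?_⟩
        exact Finset.mem_powersetCard.2 ⟨Finset.subset_univ _, rfl⟩
      calc Ws.card ≤ ((Finset.range (k-1)).biUnion (fun j => Finset.univ.powersetCard j)).card :=
            Finset.card_le_card hsub2
      _ ≤ ∑ j ∈ Finset.range (k-1), (Finset.univ.powersetCard j : Finset (Finset (Fin q))).card :=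
            Finset.card_biUnion_le
      _ ≤ ∑ j ∈ Finset.range (k-1), q^j := by
            apply Finset.sum_le_sum
            intro j _
            rw [Finset.card_powersetCard, Finset.card_univ, Fintype.card_fin]
            exact Nat.choose_le_pow q j
      _ ≤ (q+1)^(k-2) := by
            have hrw : k - 1 = (k-2) + 1 := by omega
            rw [hrw]
            exact geom_sum_le q (k-2) (by omega)
    calc R.card ≤ (Finset.univ ×ˢ Ws).card := Finset.card_le_card hsub
    _ = q * Ws.card := by rw [Finset.card_product, Finset.card_univ, Fintype.card_fin]
    _ ≤ q * (q+1)^(k-2) := Nat.mul_le_mul_left q hWscard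
  -- numeric bound
  have hβpos : (0:ℝ) < ((2:ℝ) ^ (k-1))⁻¹ := by positivity
  have hβle : ((2:ℝ) ^ (k-1))⁻¹ ≤ 1/2 := by
    rw [inv_le_comm₀ (by positivity) (by norm_num)]
    calc ((1:ℝ)/2)⁻¹ = 2^1 := by norm_num
    _ ≤ 2 ^ (k-1) := by
        apply pow_le_pow_right₀ (by norm_num)
        omega
  set β : ℝ := ((2:ℝ) ^ (k-1))⁻¹ with hβ
  have h1β : (0:ℝ) < 1 - β := by linarith
  have hNat : q * (q+1)^(k-2) ≤ q^(2*k-2) := by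
    have h1 : q + 1 ≤ q^2 := by nlinarith
    calc q * (q+1)^(k-2) ≤ q * (q^2)^(k-2) :=
          Nat.mul_le_mul_left q (Nat.pow_le_pow_left h1 _)
    _ = q^(2*(k-2)+1) := by rw [← pow_mul, ← pow_succ']
    _ ≤ q^(2*k-2) := Nat.pow_le_pow_right (by omega) (by omega)
  have hmain : (R.card : ℝ) < ((1 - β)⁻¹) ^ N := by
    have hc1 : (R.card : ℝ) ≤ (q:ℝ)^(2*k-2) := by
      calc (R.card : ℝ) ≤ ((q * (q+1)^(k-2) : ℕ) : ℝ) := by exact_mod_cast hcount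
      _ ≤ ((q^(2*k-2) : ℕ) : ℝ) := by exact_mod_cast hNat
      _ = (q:ℝ)^(2*k-2) := by push_cast; ring
    have hc2 : (q:ℝ)^(2*k-2) = Real.exp (((2*k-2 : ℕ) : ℝ) * Real.log q) := by
      rw [Real.exp_nat_mul, Real.exp_log (by linarith)]
    have hcast : ((2*k-2 : ℕ) : ℝ) = 2*(k:ℝ) - 2 := by
      push_cast [Nat.cast_sub (by omega : 2 ≤ 2*k)]
      ring
    have hc3 : ((2*k-2 : ℕ) : ℝ) * Real.log q < (N:ℝ) * β := by
      have h2pow : (2:ℝ)^(k-1) * β = 1 := mul_inv_cancel₀ (by positivity)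
      have hNx : (x + 1 : ℝ) ≤ (N:ℝ) := by
        rw [hN]
        push_cast
        have := Nat.le_ceil x
        linarith
      have hxβ : x * β = (2*(k:ℝ) - 2) * Real.log q := by
        rw [hx]
        calc 2 ^ (k-1) * (2*(k:ℝ) - 2) * Real.log q * β
            = (2^(k-1) * β) * ((2*(k:ℝ) - 2) * Real.log q) := by ring
        _ = (2*(k:ℝ) - 2) * Real.log q := by rw [h2pow]; ring
      have : (x + 1) * β ≤ (N:ℝ) * β := mul_le_mul_of_nonneg_right hNx hβpos.le
      rw [hcast]
      nlinarith
    have hc4 : Real.exp ((N:ℝ) * β) ≤ ((1 - β)⁻¹) ^ N := by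
      have he : Real.exp β ≤ (1 - β)⁻¹ := by
        have h1 : 1 - β ≤ Real.exp (-β) := by
          have := Real.add_one_le_exp (-β)
          linarith
        have h2 : (Real.exp (-β))⁻¹ ≤ (1 - β)⁻¹ :=
          inv_anti₀ h1β h1
        rwa [Real.exp_neg, inv_inv] at h2
      calc Real.exp ((N:ℝ) * β) = (Real.exp β) ^ N := by
            rw [Real.exp_nat_mul]
      _ ≤ ((1 - β)⁻¹) ^ N := pow_le_pow_left₀ (Real.exp_nonneg _) he N
    calc (R.card : ℝ) ≤ (q:ℝ)^(2*k-2) := hc1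
    _ = Real.exp (((2*k-2 : ℕ) : ℝ) * Real.log q) := hc2
    _ < Real.exp ((N:ℝ) * β) := Real.exp_lt_exp.2 hc3
    _ ≤ ((1 - β)⁻¹) ^ N := hc4
  obtain ⟨𝓕, hcard, hcov⟩ := cover_rec hk (by omega) N R
    (fun r hr => (Finset.mem_filter.1 hr).2) hmain
  refine ⟨𝓕, ?_, ?_⟩
  · calc (𝓕.card : ℝ) ≤ (N:ℝ) := by exact_mod_cast hcard
    _ = (⌈x⌉₊ : ℝ) + 1 := by rw [hN]; push_cast; ring
    _ ≤ x + 2 := by have := Nat.ceil_lt_add_one hxpos; linarith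
  · intro m W h1 h2
    exact hcov (m, W) (Finset.mem_filter.2 ⟨Finset.mem_univ _, h1, h2⟩)
end Cover2

section Mates
variable {α : Type*} [PartialOrder α] {k : ℕ} {A B : Set α}

lemma mates_give_std (hk : 3 ≤ k) (hbip : IsBipartition A B)
    {g : Fin k → α} (hginj : Function.Injective g) (hgA : ∀ i, g i ∈ A)
    (hmate : ∀ i, ∃ b, IsMate g i b) : HasStdExample α k := by
  obtain ⟨hcover, hdisj, hlt⟩ := hbip
  have hanti : ∀ x ∈ A, ∀ y ∈ A, x ≤ y → x = y := by
    intro x hx y hy hxy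
    by_contra hne
    exact hdisj y ⟨hy, (hlt x y (lt_of_le_of_ne hxy hne)).2⟩
  choose b hb using hmate
  have hjne : ∀ i : Fin k, ∃ j : Fin k, j ≠ i := by
    intro i
    haveI : Nontrivial (Fin k) := Fin.nontrivial_iff_two_le.2 (by omega)
    exact exists_ne i
  have hbB : ∀ i, b i ∈ B := by
    intro i
    obtain ⟨j, hj⟩ := hjne i
    exact (hlt (g j) (b i) ((hb i).2 j hj)).2
  have hbinj : ∀ i j, i ≠ j → b i ≠ b j := by
    intro i j hij heq
    have h1 : g i < b j := (hb j).2 i hij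
    exact (hb i).1.1 (le_of_lt (heq ▸ h1))
  refine ⟨g, b, ?_, ?_, ?_, ?_⟩
  · intro i j
    constructor
    · intro h
      exact hginj (hanti _ (hgA i) _ (hgA j) h)
    · rintro rfl; exact le_refl _
  · intro i j
    constructor
    · intro h
      by_contra hne
      have hlt' := lt_of_le_of_ne h (hbinj i j hne)
      exact hdisj (b i) ⟨(hlt _ _ hlt').1, hbB i⟩
    · rintro rfl; exact le_refl _
  · intro i j
    constructor
    · intro h hij
      subst hij
      exact (hb i).1.1 h
    · intro hij
      exact ((hb j).2 i hij).le
  · intro i j h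
    have hne : b i ≠ g j := fun he => hdisj (g j) ⟨hgA j, he ▸ hbB i⟩
    exact hdisj (b i) ⟨(hlt _ _ (lt_of_le_of_ne h hne)).1, hbB i⟩

lemma exists_no_mate (hk : 3 ≤ k) (hbip : IsBipartition A B) (hfree : SkFree α k)
    {g : Fin k → α} (hginj : Function.Injective g) (hgA : ∀ i, g i ∈ A) :
    ∃ i, ¬ ∃ b, IsMate g i b := by
  by_contra h
  push_neg at h
  exact hfree (mates_give_std hk hbip hginj hgA (fun i => h i))

end Mates

section Rank
attribute [local instance] Classical.propDecidable
variable {γ : Type*} [PartialOrder γ] [Fintype γ]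

lemma rank_strict {Ls : γ → γ → Prop} (h : IsLinExt Ls) {u v : γ} (huv : Ls u v) (hne : u ≠ v) :
    (Finset.univ.filter (fun z => Ls z u)).card < (Finset.univ.filter (fun z => Ls z v)).card := by
  classical
  apply Finset.card_lt_card
  rw [Finset.ssubset_iff_of_subset]
  · refine ⟨v, Finset.mem_filter.2 ⟨Finset.mem_univ _, h.1.toIsPartialOrder.toIsPreorder.toRefl.refl v⟩, ?_⟩
    intro hv
    exact hne (h.1.toIsPartialOrder.toAntisymm.antisymm _ _ huv (Finset.mem_filter.1 hv).2)
  · intro z hz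
    exact Finset.mem_filter.2 ⟨Finset.mem_univ _,
      h.1.toIsPartialOrder.toIsPreorder.toIsTrans.trans _ _ _ (Finset.mem_filter.1 hz).2 huv⟩

lemma rank_mono {Ls : γ → γ → Prop} (h : IsLinExt Ls) {u v : γ} (huv : Ls u v) :
    (Finset.univ.filter (fun z => Ls z u)).card ≤ (Finset.univ.filter (fun z => Ls z v)).card := by
  classical
  apply Finset.card_le_card
  intro z hz
  exact Finset.mem_filter.2 ⟨Finset.mem_univ _,
    h.1.toIsPartialOrder.toIsPreorder.toIsTrans.trans _ _ _ (Finset.mem_filter.1 hz).2 huv⟩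

end Rank
lemma orderEmbOfFin_index {β : Type*} [LinearOrder β] (J : Finset β) {k : ℕ} (hJ : J.card = k)
    (m : β) (hm : m ∈ J) (i : Fin k)
    (hcard : (J.filter (fun x => x < m)).card = i.val) :
    J.orderEmbOfFin hJ i = m := by
  classical
  have hfilt : ∀ i' : Fin k,
      (J.filter (fun x => x < J.orderEmbOfFin hJ i')).card = i'.val := by
    intro i'
    have himg : J.filter (fun x => x < J.orderEmbOfFin hJ i')
        = (Finset.univ.filter (fun j : Fin k => j < i')).image (J.orderEmbOfFin hJ) := by
      ext x
      simp only [Finset.mem_filter, Finset.mem_image, Finset.mem_univ, true_and]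
      constructor
      · rintro ⟨hxJ, hxlt⟩
        have hx : x ∈ Set.range (J.orderEmbOfFin hJ) := by
          rw [Finset.range_orderEmbOfFin]
          exact hxJ
        obtain ⟨j, rfl⟩ := hx
        exact ⟨j, (J.orderEmbOfFin hJ).strictMono.lt_iff_lt.1 hxlt, rfl⟩
      · rintro ⟨j, hj, rfl⟩
        exact ⟨Finset.orderEmbOfFin_mem J hJ j, (J.orderEmbOfFin hJ).strictMono hj⟩
    rw [himg, Finset.card_image_of_injective _ (J.orderEmbOfFin hJ).injective]
    rw [show Finset.univ.filter (fun j : Fin k => j < i') = Finset.Iio i' by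
      ext j; simp]
    exact Fin.card_Iio i'
  obtain ⟨i'', hi''⟩ : ∃ i'', J.orderEmbOfFin hJ i'' = m := by
    have hx : m ∈ Set.range (J.orderEmbOfFin hJ) := by
      rw [Finset.range_orderEmbOfFin]
      exact hm
    exact hx
  have hval : i''.val = i.val := by
    rw [← hfilt i'', hi'', hcard]
  rw [← hi'']
  congr 1
  exact Fin.ext hval.symm


/-- Lemma 3.3 (removal lemma): with `c = 3k·2^k`, for every `2 ≤ q ≤ r(n)` there
is `Q ⊆ A` of size `q` with `dim(P) ≤ dim(P − Q) + c·ln q`. -/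
theorem stmt10 {α : Type*} [Fintype α] [PartialOrder α] [DecidableEq α]
    {k n : ℕ} (hk : 3 ≤ k)
    (A B : Finset α) (hbip : IsBipartition (A : Set α) (B : Set α))
    (hfree : SkFree α k) (hA : n ≤ A.card) (hrn : 2 ≤ monoRamsey k n) :
    ∀ q : ℕ, 2 ≤ q → q ≤ monoRamsey k n →
      ∃ Q : Finset α, Q ⊆ A ∧ Q.card = q ∧
        (orderDim α : ℝ) ≤
          (orderDim {x : α // x ∉ Q} : ℝ) + 3 * k * 2 ^ k * Real.log q := by
  classical
  intro q hq2 hqr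
  -- basic bipartition facts
  have hltAB' : ∀ x y : α, x < y → x ∈ A ∧ y ∈ B := by
    intro x y h
    have := hbip.2.2 x y h
    simpa using this
  have hdisj' : ∀ x : α, x ∈ A → x ∈ B → False := by
    intro x h1 h2
    exact hbip.2.1 x ⟨by simpa using h1, by simpa using h2⟩
  have hAanti : ∀ x ∈ A, ∀ y ∈ A, x ≤ y → x = y := by
    intro x hx y hy hxy
    by_contra hne
    exact hdisj' y hy (hltAB' x y (lt_of_le_of_ne hxy hne)).2
  -- injection of Fin n into A
  set e := A.equivFin with he
  set ι : Fin n → α := fun i => ↑(e.symm (Fin.castLE hA i)) with hι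
  have hιA : ∀ i, ι i ∈ A := fun i => (e.symm _).2
  have hιinj : Function.Injective ι := by
    intro i j h
    have h1 : e.symm (Fin.castLE hA i) = e.symm (Fin.castLE hA j) := Subtype.ext h
    have h2 := e.symm.injective h1
    have h3 := congrArg Fin.val h2
    simpa using Fin.ext h3
  -- the coloring
  have hg : ∀ (s : Finset (Fin n)) (h : s.card = k),
      ∃ i : Fin k, ¬ ∃ b, IsMate (fun i => ι (s.orderEmbOfFin h i)) i b := by
    intro s h
    apply exists_no_mate hk hbip hfree
    · intro i j hij
      exact (s.orderEmbOfFin h).injective (hιinj hij)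
    · intro i
      simpa using hιA _
  set χ : Finset (Fin n) → Fin k := fun s =>
    if h : s.card = k then Classical.choose (hg s h) else ⟨0, by omega⟩ with hχdef
  have hχ : ∀ (s : Finset (Fin n)) (h : s.card = k),
      ¬ ∃ b, IsMate (fun i => ι (s.orderEmbOfFin h i)) (χ s) b := by
    intro s h
    have hch : χ s = Classical.choose (hg s h) := by
      rw [hχdef]
      exact dif_pos h
    rw [hch]
    exact Classical.choose_spec (hg s h)
  -- Ramsey extraction
  have hble : monoRamsey k n ≤
      sSup { c | ∃ H : Finset (Fin n), H.card = c ∧ MonoSet k χ H } :=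
    Nat.sInf_le ⟨χ, rfl⟩
  have h0SM : (0 : ℕ) ∈ { c | ∃ H : Finset (Fin n), H.card = c ∧ MonoSet k χ H } := by
    refine ⟨∅, Finset.card_empty, ?_⟩
    intro s t hs ht hsk htk
    exfalso
    have hse : s = ∅ := Finset.subset_empty.1 hs
    rw [hse, Finset.card_empty] at hsk
    omega
  have hbddSM : BddAbove { c | ∃ H : Finset (Fin n), H.card = c ∧ MonoSet k χ H } := by
    refine ⟨n, ?_⟩
    rintro c ⟨H, rfl, -⟩
    calc H.card ≤ (Finset.univ : Finset (Fin n)).card := Finset.card_le_univ H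
    _ = n := by simp
  obtain ⟨H, hHcard, hHmono⟩ := Nat.sSup_mem ⟨0, h0SM⟩ hbddSM
  have hqH : q ≤ H.card := by
    rw [hHcard]
    exact le_trans hqr hble
  obtain ⟨H₀, hH₀sub, hH₀card⟩ := Finset.exists_subset_card_eq hqH
  -- the set Q
  set emb0 := H₀.orderEmbOfFin hH₀card with hemb0
  set aQ : Fin q → α := fun j => ι (emb0 j) with haQ
  have haQinj : Function.Injective aQ := fun i j h => emb0.injective (hιinj h)
  set Q : Finset α := H₀.image ι with hQdef
  have hQA : Q ⊆ A := by
    intro x hx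
    obtain ⟨i, -, rfl⟩ := Finset.mem_image.1 hx
    exact hιA i
  have hQcard : Q.card = q := by
    rw [hQdef, Finset.card_image_of_injective _ hιinj, hH₀card]
  have haQmem : ∀ j, aQ j ∈ Q := by
    intro j
    exact Finset.mem_image.2 ⟨emb0 j, Finset.orderEmbOfFin_mem _ _ j, rfl⟩
  have hQrepr : ∀ x ∈ Q, ∃ j, aQ j = x := by
    intro x hx
    obtain ⟨i, hi, rfl⟩ := Finset.mem_image.1 hx
    have : i ∈ Set.range emb0 := by
      rw [hemb0, Finset.range_orderEmbOfFin]
      exact hi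
    obtain ⟨j, rfl⟩ := this
    exact ⟨j, rfl⟩
  have hQanti : ∀ i j, aQ i ≤ aQ j → i = j := by
    intro i j h
    exact haQinj (hAanti _ (hQA (haQmem i)) _ (hQA (haQmem j)) h)
  -- the combinatorial claim
  have hclaim : ∀ (m : Fin q) (y : α), ¬ aQ m ≤ y → ¬ y ≤ aQ m →
      (Finset.univ.filter (fun j => j < m ∧ aQ j < y)).card ≤ k - 2 ∨
      (Finset.univ.filter (fun j => m < j ∧ aQ j < y)).card ≤ k - 2 := by
    intro m y hmy hym
    by_contra hcon
    push_neg at hcon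
    obtain ⟨hL, hR⟩ := hcon
    set Lset := Finset.univ.filter (fun j => j < m ∧ aQ j < y) with hLset
    set Rset := Finset.univ.filter (fun j => m < j ∧ aQ j < y) with hRset
    have hdisjLR : Disjoint Lset Rset := by
      rw [Finset.disjoint_left]
      intro a ha hb
      have h1 := (Finset.mem_filter.1 ha).2.1
      have h2 := (Finset.mem_filter.1 hb).2.1
      exact absurd (h1.trans h2) (lt_irrefl a)
    have hqk : k ≤ q := by
      have h1 : (Lset ∪ Rset).card = Lset.card + Rset.card :=
        Finset.card_union_of_disjoint hdisjLR
      have h2 : (Lset ∪ Rset).card ≤ q := by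
        calc (Lset ∪ Rset).card ≤ (Finset.univ : Finset (Fin q)).card :=
              Finset.card_le_univ _
        _ = q := by simp
      omega
    obtain ⟨s₀, hs₀sub, hs₀card⟩ := Finset.exists_subset_card_eq (s := H₀) (n := k) (by rw [hH₀card]; exact hqk)
    set i₀ := χ s₀ with hi₀
    obtain ⟨L', hL'sub, hL'card⟩ :=
      Finset.exists_subset_card_eq (s := Lset) (n := i₀.val) (by have := i₀.2; omega)
    obtain ⟨R', hR'sub, hR'card⟩ :=
      Finset.exists_subset_card_eq (s := Rset) (n := k - 1 - i₀.val) (by have := i₀.2; omega)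
    set J := insert m (L' ∪ R') with hJ
    have hmnot : m ∉ L' ∪ R' := by
      intro hmem
      rcases Finset.mem_union.1 hmem with h | h
      · exact absurd (Finset.mem_filter.1 (hL'sub h)).2.1 (lt_irrefl m)
      · exact absurd (Finset.mem_filter.1 (hR'sub h)).2.1 (lt_irrefl m)
    have hJcard : J.card = k := by
      rw [hJ, Finset.card_insert_of_notMem hmnot,
        Finset.card_union_of_disjoint (Finset.disjoint_of_subset_left hL'sub
          (Finset.disjoint_of_subset_right hR'sub hdisjLR)), hL'card, hR'card]
      have := i₀.2
      omega
    set s := J.image emb0 with hs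
    have hssub : s ⊆ H₀ := by
      intro x hx
      obtain ⟨j, -, rfl⟩ := Finset.mem_image.1 hx
      exact Finset.orderEmbOfFin_mem _ _ j
    have hscard : s.card = k := by
      rw [hs, Finset.card_image_of_injective _ emb0.injective, hJcard]
    have hcolor : χ s = i₀ := by
      rw [hi₀]
      exact hHmono s s₀ (hssub.trans hH₀sub) (hs₀sub.trans hH₀sub) hscard hs₀card
    have hembs : ∀ i : Fin k, s.orderEmbOfFin hscard i = emb0 (J.orderEmbOfFin hJcard i) := by
      have hu := Finset.orderEmbOfFin_unique hscard
        (f := fun i => emb0 (J.orderEmbOfFin hJcard i))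
        (fun i => Finset.mem_image.2 ⟨_, Finset.orderEmbOfFin_mem _ _ i, rfl⟩)
        (emb0.strictMono.comp (J.orderEmbOfFin hJcard).strictMono)
      intro i
      exact (congrFun hu i).symm
    have hJm : J.orderEmbOfFin hJcard i₀ = m := by
      apply orderEmbOfFin_index J hJcard m (Finset.mem_insert_self _ _) i₀
      have hfJ : J.filter (fun x => x < m) = L' := by
        ext x
        simp only [Finset.mem_filter, hJ, Finset.mem_insert, Finset.mem_union]
        constructor
        · rintro ⟨h1 | h1, h2⟩
          · exact absurd h2 (h1 ▸ lt_irrefl m)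
          rcases h1 with h1 | h1
          · exact h1
          · exact absurd ((Finset.mem_filter.1 (hR'sub h1)).2.1.trans h2) (lt_irrefl m)
        · intro hx
          exact ⟨Or.inr (Or.inl hx), (Finset.mem_filter.1 (hL'sub hx)).2.1⟩
      rw [hfJ, hL'card]
    apply hχ s hscard
    rw [hcolor]
    refine ⟨y, ?_, ?_⟩
    · show Incomp (ι (s.orderEmbOfFin hscard i₀)) y
      rw [hembs i₀, hJm]
      exact ⟨hmy, hym⟩
    · intro j hj
      show ι (s.orderEmbOfFin hscard j) < y
      rw [hembs j]
      have h1 : J.orderEmbOfFin hJcard j ∈ J := Finset.orderEmbOfFin_mem _ _ j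
      have h2 : J.orderEmbOfFin hJcard j ≠ m := by
        intro h
        exact hj ((J.orderEmbOfFin hJcard).injective (h.trans hJm.symm))
      rcases Finset.mem_insert.1 h1 with h | h
      · exact absurd h h2
      rcases Finset.mem_union.1 h with h | h
      · exact (Finset.mem_filter.1 (hL'sub h)).2.2
      · exact (Finset.mem_filter.1 (hR'sub h)).2.2
  -- realizer of the subtype poset
  obtain ⟨Lsub, hLsub⟩ := realizer_exists {x : α // x ∉ Q}
  obtain ⟨Ls, hLs⟩ := exists_linext α
  obtain ⟨𝓕, h𝓕card, h𝓕cov⟩ := cover_main k q hk hq2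
  -- key functions
  set rk : Fin (orderDim {x : α // x ∉ Q}) → α → ℕ := fun i x =>
    if hx : x ∉ Q then
      (Finset.univ.filter (fun z : {x : α // x ∉ Q} => Lsub i z ⟨x, hx⟩)).card + 1
    else 0 with hrk
  have hQnotB : ∀ x ∈ Q, ∀ z : α, ¬ x < z → True := fun _ _ _ _ => trivial
  have hrkmono : ∀ i, Monotone (rk i) := by
    intro i x y hxy
    rcases eq_or_lt_of_le hxy with rfl | hlt'
    · exact le_refl _
    obtain ⟨hxA, hyB⟩ := hltAB' x y hlt'
    have hyQ : y ∉ Q := fun hy => hdisj' y (hQA hy) hyB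
    by_cases hxQ : x ∉ Q
    · simp only [hrk, dif_pos hxQ, dif_pos hyQ]
      have hle : Lsub i ⟨x, hxQ⟩ ⟨y, hyQ⟩ := (hLsub.1 i).2 _ _ (Subtype.mk_le_mk.2 hxy)
      exact Nat.succ_le_succ (rank_mono (hLsub.1 i) hle)
    · simp only [hrk, dif_neg hxQ]
      exact Nat.zero_le _
  set κ1 : α → ℕ := fun x =>
    if x ∈ Q then (Finset.univ.filter (fun j => aQ j ≤ x)).sup (fun j => j.val + 1)
    else q + 2 with hκ1
  set κ2 : α → ℕ := fun x =>
    if x ∈ Q then (Finset.univ.filter (fun j => aQ j ≤ x)).sup (fun j => q - j.val)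
    else q + 2 with hκ2
  set κsup : (Fin q → ℕ) → α → ℕ := fun w x =>
    (Finset.univ.filter (fun j => aQ j ≤ x)).sup w with hκsup
  set wP : Finset (Fin q) → Fin q → ℕ := fun F j =>
    if j ∈ F then q + 1 + j.val else j.val + 1 with hwP
  set wM : Finset (Fin q) → Fin q → ℕ := fun F j =>
    if j ∈ F then q + 1 + (q - 1 - j.val) else j.val + 1 with hwM
  have hfiltm : ∀ m : Fin q, Finset.univ.filter (fun j => aQ j ≤ aQ m) = {m} := by
    intro m
    ext j
    simp only [Finset.mem_filter, Finset.mem_univ, true_and, Finset.mem_singleton]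
    constructor
    · intro h
      exact hQanti j m h
    · rintro rfl
      exact le_refl _
  have hκ1Q : ∀ m : Fin q, κ1 (aQ m) = m.val + 1 := by
    intro m
    rw [hκ1]
    simp only [if_pos (haQmem m), hfiltm m, Finset.sup_singleton]
  have hκ2Q : ∀ m : Fin q, κ2 (aQ m) = q - m.val := by
    intro m
    rw [hκ2]
    simp only [if_pos (haQmem m), hfiltm m, Finset.sup_singleton]
  have hκsupQ : ∀ (w : Fin q → ℕ) (m : Fin q), κsup w (aQ m) = w m := by
    intro w m
    rw [hκsup]
    simp only [hfiltm m, Finset.sup_singleton]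
  have hκ1mono : Monotone κ1 := by
    intro x y hxy
    rcases eq_or_lt_of_le hxy with rfl | hlt'
    · exact le_refl _
    obtain ⟨hxA, hyB⟩ := hltAB' x y hlt'
    have hyQ : y ∉ Q := fun hy => hdisj' y (hQA hy) hyB
    rw [hκ1]
    simp only [if_neg hyQ]
    by_cases hxQ : x ∈ Q
    · simp only [if_pos hxQ]
      apply Finset.sup_le
      intro j _
      have := j.2
      omega
    · simp only [if_neg hxQ]
      exact le_rfl
  have hκ2mono : Monotone κ2 := by
    intro x y hxy
    rcases eq_or_lt_of_le hxy with rfl | hlt'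
    · exact le_refl _
    obtain ⟨hxA, hyB⟩ := hltAB' x y hlt'
    have hyQ : y ∉ Q := fun hy => hdisj' y (hQA hy) hyB
    rw [hκ2]
    simp only [if_neg hyQ]
    by_cases hxQ : x ∈ Q
    · simp only [if_pos hxQ]
      apply Finset.sup_le
      intro j _
      omega
    · simp only [if_neg hxQ]
      exact le_rfl
  have hκsupmono : ∀ w, Monotone (κsup w) := by
    intro w x y hxy
    apply Finset.sup_mono
    intro j hj
    exact Finset.mem_filter.2 ⟨Finset.mem_univ _, ((Finset.mem_filter.1 hj).2).trans hxy⟩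
  -- assemble the list of linear extensions
  set Ms : List (α → α → Prop) :=
    List.ofFn (fun i : Fin (orderDim {x : α // x ∉ Q}) => kext Ls (rk i)) with hMs
  set Fs1 : List (α → α → Prop) := 𝓕.toList.map (fun F => kext Ls (κsup (wP F))) with hFs1
  set Fs2 : List (α → α → Prop) := 𝓕.toList.map (fun F => kext Ls (κsup (wM F))) with hFs2
  set l : List (α → α → Prop) :=
    Ms ++ kext Ls κ1 :: kext Ls κ2 :: (Fs1 ++ Fs2) with hl
  have hE1mem : kext Ls κ1 ∈ l := by
    rw [hl]
    exact List.mem_append.2 (Or.inr (List.mem_cons_self))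
  have hE2mem : kext Ls κ2 ∈ l := by
    rw [hl]
    exact List.mem_append.2 (Or.inr (List.mem_cons_of_mem _ (List.mem_cons_self)))
  have hlen : l.length = orderDim {x : α // x ∉ Q} + (2 + 2 * 𝓕.card) := by
    rw [hl]
    simp only [List.length_append, List.length_cons, hMs, List.length_ofFn, hFs1, hFs2,
      List.length_map, Finset.length_toList]
    ring
  have hmem1 : ∀ r ∈ l, IsLinExt r := by
    intro r hr
    rw [hl] at hr
    rcases List.mem_append.1 hr with hr | hr
    · rw [hMs] at hr
      rw [List.mem_ofFn] at hr
      obtain ⟨i, rfl⟩ := hr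
      exact kext_isLinExt hLs (hrkmono i)
    rcases List.mem_cons.1 hr with rfl | hr
    · exact kext_isLinExt hLs hκ1mono
    rcases List.mem_cons.1 hr with rfl | hr
    · exact kext_isLinExt hLs hκ2mono
    rcases List.mem_append.1 hr with hr | hr
    · rw [hFs1] at hr
      obtain ⟨F, -, rfl⟩ := List.mem_map.1 hr
      exact kext_isLinExt hLs (hκsupmono _)
    · rw [hFs2] at hr
      obtain ⟨F, -, rfl⟩ := List.mem_map.1 hr
      exact kext_isLinExt hLs (hκsupmono _)
  have hmem2 : ∀ a b : α, ¬ a ≤ b → ∃ r ∈ l, ¬ r a b := by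
    intro a b hab
    by_cases hba : b ≤ a
    · have hba' : b < a := lt_of_le_of_ne hba (by rintro rfl; exact hab le_rfl)
      exact ⟨kext Ls κ1, hE1mem, linext_rev_of_lt (kext_isLinExt hLs hκ1mono) hba'⟩
    by_cases hbQ : b ∈ Q
    · obtain ⟨m, rfl⟩ := hQrepr b hbQ
      by_cases haQ' : a ∈ Q
      · obtain ⟨j, rfl⟩ := hQrepr a haQ'
        have hjm : j ≠ m := by
          rintro rfl
          exact hab le_rfl
        rcases lt_or_gt_of_ne hjm with h | h
        · -- j < m : use κ2 : q - m < q - j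
          refine ⟨kext Ls κ2, hE2mem, kext_rev ?_⟩
          rw [hκ2Q m, hκ2Q j]
          have h1 := m.2
          have h2 : j.val < m.val := h
          omega
        · -- m < j : use κ1 : m + 1 < j + 1
          refine ⟨kext Ls κ1, hE1mem, kext_rev ?_⟩
          rw [hκ1Q m, hκ1Q j]
          have h2 : m.val < j.val := h
          omega
      · refine ⟨kext Ls κ1, hE1mem, kext_rev ?_⟩
        rw [hκ1Q m, hκ1]
        simp only [if_neg haQ']
        have := m.2
        omega
    -- b ∉ Q
    by_cases haQ' : a ∈ Q
    · obtain ⟨m, rfl⟩ := hQrepr a haQ'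
      have hTb : ∀ j : Fin q, aQ j ≤ b → aQ j < b := by
        intro j hj
        refine lt_of_le_of_ne hj ?_
        intro h
        exact hbQ (h ▸ haQmem j)
      rcases hclaim m b hab hba with hcase | hcase
      · -- left small : use wM F (descending)
        obtain ⟨F, hF𝓕, hmF, hFW⟩ := h𝓕cov m
          (Finset.univ.filter (fun j => j < m ∧ aQ j < b))
          (by simp) hcase
        refine ⟨kext Ls (κsup (wM F)), ?_, kext_rev ?_⟩
        · rw [hl]
          refine List.mem_append.2 (Or.inr (List.mem_cons_of_mem _
            (List.mem_cons_of_mem _ (List.mem_append.2 (Or.inr ?_)))))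
          rw [hFs2]
          exact List.mem_map.2 ⟨F, Finset.mem_toList.2 hF𝓕, rfl⟩
        · rw [hκsupQ]
          have hwm : wM F m = q + 1 + (q - 1 - m.val) := by
            rw [hwM]
            simp only [if_pos hmF]
          rw [hκsup]
          apply Finset.sup_lt_iff (by rw [hwm, Nat.bot_eq_zero]; omega) |>.2
          intro j hj
          have hjb : aQ j < b := hTb j (Finset.mem_filter.1 hj).2
          have hjm : j ≠ m := by
            rintro rfl
            exact hab hjb.le
          by_cases hjF : j ∈ F
          · have hjW : j ∉ Finset.univ.filter (fun j => j < m ∧ aQ j < b) := by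
              intro hjW
              have hmem := Finset.mem_inter.2 ⟨hjF, hjW⟩
              rw [hFW] at hmem
              exact absurd hmem (Finset.notMem_empty j)
            have hjnm : ¬ j < m := by
              intro hlt''
              exact hjW (Finset.mem_filter.2 ⟨Finset.mem_univ _, hlt'', hjb⟩)
            have hmj : m < j := lt_of_le_of_ne (not_lt.1 hjnm) (Ne.symm hjm)
            rw [hwm, hwM]
            simp only [if_pos hjF]
            have h1 := j.2
            have h2 := m.2
            have h3 : m.val < j.val := hmj
            omega
          · rw [hwm, hwM]
            simp only [if_neg hjF]
            have h1 := j.2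
            omega
      · -- right small : use wP F (ascending)
        obtain ⟨F, hF𝓕, hmF, hFW⟩ := h𝓕cov m
          (Finset.univ.filter (fun j => m < j ∧ aQ j < b))
          (by simp) hcase
        refine ⟨kext Ls (κsup (wP F)), ?_, kext_rev ?_⟩
        · rw [hl]
          refine List.mem_append.2 (Or.inr (List.mem_cons_of_mem _
            (List.mem_cons_of_mem _ (List.mem_append.2 (Or.inl ?_)))))
          rw [hFs1]
          exact List.mem_map.2 ⟨F, Finset.mem_toList.2 hF𝓕, rfl⟩
        · rw [hκsupQ]
          have hwm : wP F m = q + 1 + m.val := by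
            rw [hwP]
            simp only [if_pos hmF]
          rw [hκsup]
          apply Finset.sup_lt_iff (by rw [hwm, Nat.bot_eq_zero]; omega) |>.2
          intro j hj
          have hjb : aQ j < b := hTb j (Finset.mem_filter.1 hj).2
          have hjm : j ≠ m := by
            rintro rfl
            exact hab hjb.le
          by_cases hjF : j ∈ F
          · have hjW : j ∉ Finset.univ.filter (fun j => m < j ∧ aQ j < b) := by
              intro hjW
              have hmem := Finset.mem_inter.2 ⟨hjF, hjW⟩
              rw [hFW] at hmem
              exact absurd hmem (Finset.notMem_empty j)
            have hjnm : ¬ m < j := by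
              intro hlt''
              exact hjW (Finset.mem_filter.2 ⟨Finset.mem_univ _, hlt'', hjb⟩)
            have hmj : j < m := lt_of_le_of_ne (not_lt.1 hjnm) hjm
            rw [hwm, hwP]
            simp only [if_pos hjF]
            have h3 : j.val < m.val := hmj
            omega
          · rw [hwm, hwP]
            simp only [if_neg hjF]
            have h1 := j.2
            omega
    · -- both outside Q : use the subtype realizer
      obtain ⟨i, hi⟩ : ∃ i, ¬ Lsub i ⟨a, haQ'⟩ ⟨b, hbQ⟩ := by
        by_contra hcon
        push_neg at hcon
        exact hab (Subtype.mk_le_mk.1 ((hLsub.2 ⟨a, haQ'⟩ ⟨b, hbQ⟩).2 hcon))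
      have hne : (⟨b, hbQ⟩ : {x : α // x ∉ Q}) ≠ ⟨a, haQ'⟩ := by
        intro h
        rw [Subtype.mk.injEq] at h
        exact hab (h ▸ le_rfl)
      have hba2 : Lsub i ⟨b, hbQ⟩ ⟨a, haQ'⟩ :=
        (auxTotal (hLsub.1 i) _ _).resolve_left hi
      refine ⟨kext Ls (rk i), ?_, kext_rev ?_⟩
      · rw [hl]
        refine List.mem_append.2 (Or.inl ?_)
        rw [hMs, List.mem_ofFn]
        exact ⟨i, rfl⟩
      · rw [hrk]
        simp only [dif_pos haQ', dif_pos hbQ]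
        exact Nat.succ_lt_succ (rank_strict (hLsub.1 i) hba2 hne)
  have hdim := orderDim_le_list l hmem1 hmem2
  refine ⟨Q, hQA, hQcard, ?_⟩
  -- numerics
  have hLq2 : (0.6931471803 : ℝ) < Real.log q := by
    calc (0.6931471803 : ℝ) < Real.log 2 := Real.log_two_gt_d9
    _ ≤ Real.log q := Real.log_le_log (by norm_num) (by exact_mod_cast hq2)
  have h2k8 : (8:ℝ) ≤ 2^k := by
    calc (8:ℝ) = 2^3 := by norm_num
    _ ≤ 2^k := pow_le_pow_right₀ one_le_two hk
  have hk3' : (3:ℝ) ≤ (k:ℝ) := by exact_mod_cast hk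
  have h2pow : (2:ℝ) * 2^(k-1) = 2^k := by
    rw [← pow_succ']
    congr 1
    omega
  have hfinal : (2:ℝ) + 2 * 𝓕.card ≤ 3 * k * 2^k * Real.log q := by
    set Lq := Real.log q with hLqdef
    have hLqpos : 0 < Lq := by linarith
    set P : ℝ := 2^k * Lq with hP
    have hPpos : 0 < P := by positivity
    have hP8 : (8:ℝ) * 0.6931471803 ≤ P := by
      rw [hP]
      have := mul_le_mul h2k8 hLq2.le (by norm_num) (by positivity)
      linarith
    have hkey : (6:ℝ) ≤ ((k:ℝ) + 2) * P := by
      have h5 : (5:ℝ) ≤ (k:ℝ) + 2 := by linarith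
      calc (6:ℝ) ≤ 5 * (8 * 0.6931471803) := by norm_num
      _ ≤ ((k:ℝ) + 2) * P := by
          apply mul_le_mul h5 hP8 (by norm_num) (by linarith)
    have hFP : 2 * (𝓕.card : ℝ) ≤ (2*(k:ℝ) - 2) * P + 4 := by
      have h1 : 2 * ((2:ℝ)^(k-1) * (2*(k:ℝ) - 2) * Lq + 2)
          = (2*(k:ℝ) - 2) * P + 4 := by
        rw [hP, ← h2pow]
        ring
      have h2 := h𝓕card
      linarith
    have hgoal : 3 * (k:ℝ) * 2^k * Lq = 3 * (k:ℝ) * P := by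
      rw [hP]; ring
    rw [hgoal]
    have hexp : (2*(k:ℝ) - 2) * P + ((k:ℝ) + 2) * P = 3 * (k:ℝ) * P := by ring
    linarith
  calc (orderDim α : ℝ) ≤ (l.length : ℝ) := by exact_mod_cast hdim
  _ = (orderDim {x : α // x ∉ Q} : ℝ) + (2 + 2 * 𝓕.card) := by
      rw [hlen]
      push_cast
      ring
  _ ≤ (orderDim {x : α // x ∉ Q} : ℝ) + 3 * k * 2^k * Real.log q := by linarith
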